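/- Let E be a complex Hilbert space and S the unilateral shift on ℓ²(ℕ,E). Let Y and Z be bounded operators on ℓ²(ℕ,E) such that YS = SY, ZS = SZ, Y = Z*S and Z = Y*S. Then there exist unique bounded operators A and B on E such that Y = Ã + S∘B̃ and Z = (B*)~ + S∘(A*)~; that is, Y and Z are the Toeplitz operators with the degree-one analytic symbols Φ_Y(z) = A + zB and Φ_Z(z) = B* + zA*. -/

import Mathlib

noncomputable section

open scoped ENNReal

namespace GammaModel

variable {E : Type*} [NormedAddCommGroup E] [NormedSpace ℂ E]

/-- The `E`-valued Hardy space `H²_E(𝔻)`, identified with `ℓ²(ℕ, E)`. -/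
abbrev L2 (E : Type*) [NormedAddCommGroup E] [NormedSpace ℂ E] : Type _ :=
  lp (fun _ : ℕ => E) 2

/-- The underlying function of the unilateral shift. -/
def shiftFun (f : ℕ → E) : ℕ → E
  | 0 => 0
  | (k + 1) => f k

lemma rpow_toReal_two (x : ℝ) : x ^ ((2 : ℝ≥0∞)).toReal = x ^ (2 : ℕ) := by
  rw [show ((2 : ℝ≥0∞)).toReal = ((2 : ℕ) : ℝ) by norm_num, Real.rpow_natCast]

lemma summable_sq_of_mem (f : L2 E) :
    Summable (fun k => ‖(f : ∀ _ : ℕ, E) k‖ ^ (2 : ℕ)) := by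
  have h := lp.memℓp f
  rw [memℓp_gen_iff (by norm_num)] at h
  simpa [rpow_toReal_two] using h

lemma memℓp_shiftFun (f : L2 E) : Memℓp (shiftFun (f : ∀ _ : ℕ, E)) 2 := by
  rw [memℓp_gen_iff (by norm_num)]
  apply (summable_nat_add_iff 1).mp
  simpa [shiftFun, rpow_toReal_two] using summable_sq_of_mem f

/-- The unilateral shift as a linear map on `ℓ²(ℕ, E)`. -/
def shiftLM : L2 E →ₗ[ℂ] L2 E where
  toFun f := ⟨shiftFun (f : ∀ _ : ℕ, E), memℓp_shiftFun f⟩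
  map_add' f g := by
    ext k
    cases k <;> simp [shiftFun, lp.coeFn_add, Pi.add_apply] <;> first | rfl | (erw [Pi.add_apply]; simp [shiftFun])
  map_smul' c f := by
    ext k
    cases k <;> simp [shiftFun, lp.coeFn_smul, Pi.smul_apply]

lemma norm_shiftLM (f : L2 E) : ‖shiftLM f‖ = ‖f‖ := by
  have h2 : (0:ℝ) < ((2 : ℝ≥0∞)).toReal := by norm_num
  have hs := lp.norm_rpow_eq_tsum h2 (shiftLM f)
  have hf := lp.norm_rpow_eq_tsum h2 f
  have hsum : Summable (fun k => ‖(shiftLM f : ∀ _ : ℕ, E) k‖ ^ ((2:ℝ≥0∞)).toReal) := by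
    have h := memℓp_shiftFun f
    rw [memℓp_gen_iff h2] at h
    exact h
  have key : ∑' k, ‖(shiftLM f : ∀ _ : ℕ, E) k‖ ^ ((2:ℝ≥0∞)).toReal
      = ∑' k, ‖(f : ∀ _ : ℕ, E) k‖ ^ ((2:ℝ≥0∞)).toReal := by
    rw [hsum.tsum_eq_zero_add]
    simp [shiftLM, shiftFun]
  have : ‖shiftLM f‖ ^ ((2:ℝ≥0∞)).toReal = ‖f‖ ^ ((2:ℝ≥0∞)).toReal := by
    rw [hs, hf, key]
  rw [rpow_toReal_two, rpow_toReal_two] at this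
  have h1 : (0:ℝ) ≤ ‖shiftLM f‖ := norm_nonneg _
  have h2' : (0:ℝ) ≤ ‖f‖ := norm_nonneg _
  nlinarith [this, h1, h2']

/-- The unilateral shift `S` on `ℓ²(ℕ, E)`: `(Sf)(0) = 0`, `(Sf)(k+1) = f(k)`. -/
def shiftL : L2 E →L[ℂ] L2 E :=
  LinearMap.mkContinuous shiftLM 1 (fun f => by rw [norm_shiftLM]; simp)

@[simp] lemma shiftL_apply_zero (f : L2 E) : (shiftL f : ∀ _ : ℕ, E) 0 = 0 := rfl

@[simp] lemma shiftL_apply_succ (f : L2 E) (k : ℕ) :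
    (shiftL f : ∀ _ : ℕ, E) (k + 1) = (f : ∀ _ : ℕ, E) k := rfl

lemma memℓp_diagFun (C : E →L[ℂ] E) (f : L2 E) :
    Memℓp (fun k => C ((f : ∀ _ : ℕ, E) k)) 2 := by
  rw [memℓp_gen_iff (by norm_num)]
  have hf := summable_sq_of_mem f
  refine Summable.of_nonneg_of_le (f := fun k => ‖C‖ ^ (2:ℕ) * ‖(f : ∀ _ : ℕ, E) k‖ ^ (2:ℕ))
    (fun k => by positivity) (fun k => ?_) (hf.mul_left _)
  show ‖C ((f : ∀ _ : ℕ, E) k)‖ ^ ((2:ℝ≥0∞)).toReal ≤ ‖C‖ ^ (2:ℕ) * ‖(f : ∀ _ : ℕ, E) k‖ ^ (2:ℕ)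
  rw [rpow_toReal_two, ← mul_pow]
  exact pow_le_pow_left₀ (norm_nonneg _) (C.le_opNorm _) 2

/-- The diagonal operator `C̃` on `ℓ²(ℕ, E)`: `(C̃ f)(k) = C (f k)`. -/
def diagLM (C : E →L[ℂ] E) : L2 E →ₗ[ℂ] L2 E where
  toFun f := ⟨fun k => C ((f : ∀ _ : ℕ, E) k), memℓp_diagFun C f⟩
  map_add' f g := by ext k; simp [lp.coeFn_add, Pi.add_apply]; rfl
  map_smul' c f := by ext k; simp [lp.coeFn_smul, Pi.smul_apply]

lemma norm_diagLM (C : E →L[ℂ] E) (f : L2 E) : ‖diagLM C f‖ ≤ ‖C‖ * ‖f‖ := by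
  have h2 : (0:ℝ) < ((2 : ℝ≥0∞)).toReal := by norm_num
  have hs := lp.norm_rpow_eq_tsum h2 (diagLM C f)
  have hf := lp.norm_rpow_eq_tsum h2 f
  have hsum : Summable (fun k => ‖(diagLM C f : ∀ _ : ℕ, E) k‖ ^ ((2:ℝ≥0∞)).toReal) := by
    have h := memℓp_diagFun C f
    rw [memℓp_gen_iff h2] at h
    exact h
  have hle : ‖diagLM C f‖ ^ (2:ℕ) ≤ (‖C‖ * ‖f‖) ^ (2:ℕ) := by
    rw [← rpow_toReal_two, hs]
    calc ∑' k, ‖(diagLM C f : ∀ _ : ℕ, E) k‖ ^ ((2:ℝ≥0∞)).toReal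
        ≤ ∑' k, ‖C‖ ^ (2:ℕ) * ‖(f : ∀ _ : ℕ, E) k‖ ^ (2:ℕ) := by
          apply Summable.tsum_le_tsum _ hsum ((summable_sq_of_mem f).mul_left _)
          intro k
          show ‖(diagLM C f : ∀ _ : ℕ, E) k‖ ^ ((2:ℝ≥0∞)).toReal
            ≤ ‖C‖ ^ (2:ℕ) * ‖(f : ∀ _ : ℕ, E) k‖ ^ (2:ℕ)
          rw [rpow_toReal_two, ← mul_pow]
          exact pow_le_pow_left₀ (norm_nonneg _) (C.le_opNorm _) 2
      _ = ‖C‖ ^ (2:ℕ) * ∑' k, ‖(f : ∀ _ : ℕ, E) k‖ ^ (2:ℕ) := by rw [tsum_mul_left]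
      _ = (‖C‖ * ‖f‖) ^ (2:ℕ) := by
          rw [mul_pow]
          congr 1
          rw [← rpow_toReal_two ‖f‖, hf]
          exact (tsum_congr (fun k => by rw [rpow_toReal_two])).symm
  have := le_of_pow_le_pow_left₀ (by norm_num) (by positivity) hle
  exact this

/-- The operator `C̃` on `ℓ²(ℕ, E)` induced by `C : E →L[ℂ] E`, `(C̃ f)(k) = C (f k)`. -/
def diagL (C : E →L[ℂ] E) : L2 E →L[ℂ] L2 E :=
  LinearMap.mkContinuous (diagLM C) ‖C‖ (norm_diagLM C)

@[simp] lemma diagL_apply (C : E →L[ℂ] E) (f : L2 E) (k : ℕ) :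
    (diagL C f : ∀ _ : ℕ, E) k = C ((f : ∀ _ : ℕ, E) k) := rfl

end GammaModel

open GammaModel ContinuousLinearMap
open scoped InnerProductSpace

set_option linter.unusedSectionVars false

namespace GammaModelAux

open GammaModel ContinuousLinearMap

variable {E : Type*} [NormedAddCommGroup E] [InnerProductSpace ℂ E] [CompleteSpace E]

local notation "⟪" x ", " y "⟫" => @inner ℂ _ _ x y

lemma single_add (k : ℕ) (x y : E) :
    (lp.single 2 k (x + y) : L2 E) = lp.single 2 k x + lp.single 2 k y := by
  apply lp.ext
  funext m
  by_cases h : m = k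
  · subst h; simp [lp.single_apply_self, lp.coeFn_add]
  · simp [lp.single_apply_ne _ _ _ h, lp.coeFn_add]

lemma shift_single (k : ℕ) (x : E) :
    shiftL (lp.single 2 k x : L2 E) = lp.single 2 (k + 1) x := by
  apply lp.ext
  funext m
  match m with
  | 0 => simp [lp.single_apply_ne _ _ _ (by omega : (0:ℕ) ≠ k + 1)]
  | m + 1 =>
    by_cases h : m = k
    · subst h; simp [lp.single_apply_self]
    · rw [shiftL_apply_succ, lp.single_apply_ne _ _ _ h,
        lp.single_apply_ne _ _ _ (by omega : m + 1 ≠ k + 1)]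

lemma diag_single (C : E →L[ℂ] E) (k : ℕ) (x : E) :
    diagL C (lp.single 2 k x : L2 E) = lp.single 2 k (C x) := by
  apply lp.ext
  funext m
  by_cases h : m = k
  · subst h; simp [lp.single_apply_self]
  · simp [lp.single_apply_ne _ _ _ h, Pi.single_apply, h]

lemma comm_apply {T : L2 E →L[ℂ] L2 E} (h : T * shiftL = shiftL * T) (f : L2 E) :
    T (shiftL f) = shiftL (T f) := by
  have := ContinuousLinearMap.ext_iff.mp h f
  simpa [ContinuousLinearMap.mul_apply] using this

lemma row0 {T : L2 E →L[ℂ] L2 E} (h : T * shiftL = shiftL * T) (k : ℕ) (x : E) :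
    (T (lp.single 2 (k + 1) x) : ∀ _ : ℕ, E) 0 = 0 := by
  rw [← shift_single, comm_apply h, shiftL_apply_zero]

lemma toep {T : L2 E →L[ℂ] L2 E} (h : T * shiftL = shiftL * T) (k m : ℕ) (x : E) :
    (T (lp.single 2 (k + 1) x) : ∀ _ : ℕ, E) (m + 1)
      = (T (lp.single 2 k x) : ∀ _ : ℕ, E) m := by
  rw [← shift_single, comm_apply h, shiftL_apply_succ]

lemma eq_of_singles (T T' : L2 E →L[ℂ] L2 E)
    (h : ∀ k (x : E), T (lp.single 2 k x) = T' (lp.single 2 k x)) : T = T' := by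
  refine ContinuousLinearMap.ext fun f => ?_
  have hs := lp.hasSum_single ENNReal.ofNat_ne_top f
  have h1 := hs.mapL T
  have h2 := hs.mapL T'
  refine h1.unique ?_
  simpa only [h] using h2

/-- The `j`-th entry of the `0`-th column of `T`, as a bounded operator. -/
def col (T : L2 E →L[ℂ] L2 E) (j : ℕ) : E →L[ℂ] E :=
  LinearMap.mkContinuous
    { toFun := fun x => (T (lp.single 2 0 x) : ∀ _ : ℕ, E) j
      map_add' := fun x y => by
        show (T (lp.single 2 0 (x + y)) : ∀ _ : ℕ, E) j = _
        rw [single_add, map_add, lp.coeFn_add, Pi.add_apply]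
      map_smul' := fun c x => by
        show (T (lp.single 2 0 (c • x)) : ∀ _ : ℕ, E) j = _
        rw [lp.single_smul, map_smul, RingHom.id_apply, lp.coeFn_smul, Pi.smul_apply] }
    ‖T‖ (fun x => by
      calc ‖(T (lp.single 2 0 x) : ∀ _ : ℕ, E) j‖
          ≤ ‖T (lp.single 2 0 x)‖ := lp.norm_apply_le_norm two_ne_zero _ j
        _ ≤ ‖T‖ * ‖(lp.single 2 0 x : L2 E)‖ := T.le_opNorm _
        _ = ‖T‖ * ‖x‖ := by
            rw [show ‖(lp.single 2 0 x : L2 E)‖ = ‖x‖ from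
              lp.norm_single (E := fun _ : ℕ => E) (p := 2) (by norm_num) 0 x])

@[simp] lemma col_apply (T : L2 E →L[ℂ] L2 E) (j : ℕ) (x : E) :
    col T j x = (T (lp.single 2 0 x) : ∀ _ : ℕ, E) j := rfl

lemma toeplitz_of_col (T : L2 E →L[ℂ] L2 E) (hTS : T * shiftL = shiftL * T)
    (P Q : E →L[ℂ] E)
    (h0 : ∀ x, T (lp.single 2 0 x) = lp.single 2 0 (P x) + lp.single 2 1 (Q x)) :
    T = diagL P + shiftL.comp (diagL Q) := by
  have key : ∀ k (x : E),
      T (lp.single 2 k x) = lp.single 2 k (P x) + lp.single 2 (k + 1) (Q x) := by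
    intro k
    induction k with
    | zero => exact h0
    | succ k ih =>
      intro x
      rw [← shift_single, comm_apply hTS, ih, map_add, shift_single, shift_single]
  apply eq_of_singles
  intro k x
  rw [key, ContinuousLinearMap.add_apply, ContinuousLinearMap.comp_apply,
    diag_single, diag_single, shift_single]

end GammaModelAux

open GammaModelAux


/-- If `Y, Z` on `ℓ²(ℕ,E)` commute with the shift `S` and satisfy `Y = Z* S`
and `Z = Y* S`, then they are Toeplitz operators with degree-one analytic symbols:
`Y = Ã + S∘B̃` and `Z = (B*)~ + S∘(A*)~` for unique bounded operators `A, B` on `E`. -/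
theorem toeplitz_of_shift_relations {E : Type*}
    [NormedAddCommGroup E] [InnerProductSpace ℂ E] [CompleteSpace E]
    (Y Z : L2 E →L[ℂ] L2 E)
    (hYS : Y * shiftL = shiftL * Y) (hZS : Z * shiftL = shiftL * Z)
    (hY : Y = adjoint Z * shiftL) (hZ : Z = adjoint Y * shiftL) :
    ∃! AB : (E →L[ℂ] E) × (E →L[ℂ] E),
      Y = diagL AB.1 + shiftL.comp (diagL AB.2) ∧
      Z = diagL (adjoint AB.2) + shiftL.comp (diagL (adjoint AB.1)) := by
  set A := col Y 0 with hA
  set B := col Y 1 with hB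
  have hYf : ∀ f : L2 E, Y f = adjoint Z (shiftL f) := fun f => by
    rw [hY]; rfl
  have hZf : ∀ f : L2 E, Z f = adjoint Y (shiftL f) := fun f => by
    rw [hZ]; rfl
  have hY0 : ∀ x : E, Y (lp.single 2 0 x) =
      lp.single 2 0 (A x) + lp.single 2 1 (B x) := by
    intro x
    apply lp.ext; funext m
    match m with
    | 0 =>
      rw [lp.coeFn_add, Pi.add_apply, lp.single_apply_self,
        lp.single_apply_ne _ _ _ (by omega : (0 : ℕ) ≠ 1), add_zero]
      rfl
    | 1 =>
      rw [lp.coeFn_add, Pi.add_apply, lp.single_apply_self,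
        lp.single_apply_ne _ _ _ (by omega : (1 : ℕ) ≠ 0), zero_add]
      rfl
    | (m + 2) =>
      have hz : ∀ y : E, ⟪(Y (lp.single 2 0 x) : ∀ _ : ℕ, E) (m + 2), y⟫_ℂ = 0 := by
        intro y
        have hZ1 : (Z (lp.single 2 (m + 2) y) : ∀ _ : ℕ, E) 1 = 0 :=
          (toep hZS (m + 1) 0 y).trans (row0 hZS m y)
        rw [← lp.inner_single_right, hYf, shift_single, adjoint_inner_left,
          lp.inner_single_left, hZ1, inner_zero_right]
      have hv := hz ((Y (lp.single 2 0 x) : ∀ _ : ℕ, E) (m + 2))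
      rw [inner_self_eq_zero] at hv
      rw [hv, lp.coeFn_add, Pi.add_apply,
        lp.single_apply_ne _ _ _ (by omega : m + 2 ≠ 0),
        lp.single_apply_ne _ _ _ (by omega : m + 2 ≠ 1), add_zero]
  have hZ0 : ∀ y : E, Z (lp.single 2 0 y) =
      lp.single 2 0 (adjoint B y) + lp.single 2 1 (adjoint A y) := by
    intro y
    apply lp.ext; funext m
    have key : ∀ m x, ⟪x, (Z (lp.single 2 0 y) : ∀ _ : ℕ, E) m⟫_ℂ
        = ⟪(Y (lp.single 2 m x) : ∀ _ : ℕ, E) 1, y⟫_ℂ := by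
      intro m x
      calc ⟪x, (Z (lp.single 2 0 y) : ∀ _ : ℕ, E) m⟫_ℂ
          = ⟪(lp.single 2 m x : L2 E), Z (lp.single 2 0 y)⟫_ℂ :=
            (lp.inner_single_left (𝕜 := ℂ) (G := fun _ : ℕ => E) m x (Z (lp.single 2 0 y))).symm
        _ = ⟪(lp.single 2 m x : L2 E), adjoint Y (lp.single 2 1 y)⟫_ℂ := by
            rw [hZf, shift_single]
        _ = ⟪Y (lp.single 2 m x), (lp.single 2 1 y : L2 E)⟫_ℂ :=
            adjoint_inner_right _ _ _
        _ = ⟪(Y (lp.single 2 m x) : ∀ _ : ℕ, E) 1, y⟫_ℂ :=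
            lp.inner_single_right (𝕜 := ℂ) (G := fun _ : ℕ => E) 1 y (Y (lp.single 2 m x))
    match m with
    | 0 =>
      refine ext_inner_left ℂ fun x => ?_
      rw [key, lp.coeFn_add, Pi.add_apply, lp.single_apply_self,
        lp.single_apply_ne _ _ _ (by omega : (0 : ℕ) ≠ 1), add_zero,
        adjoint_inner_right]
      rfl
    | 1 =>
      refine ext_inner_left ℂ fun x => ?_
      have hY11 : (Y (lp.single 2 1 x) : ∀ _ : ℕ, E) 1
          = (Y (lp.single 2 0 x) : ∀ _ : ℕ, E) 0 := toep hYS 0 0 x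
      rw [key, hY11, lp.coeFn_add, Pi.add_apply, lp.single_apply_self,
        lp.single_apply_ne _ _ _ (by omega : (1 : ℕ) ≠ 0), zero_add,
        adjoint_inner_right]
      rfl
    | (m + 2) =>
      refine ext_inner_left ℂ fun x => ?_
      have hY1 : (Y (lp.single 2 (m + 2) x) : ∀ _ : ℕ, E) 1 = 0 :=
        (toep hYS (m + 1) 0 x).trans (row0 hYS m x)
      rw [key, hY1, inner_zero_left, lp.coeFn_add, Pi.add_apply,
        lp.single_apply_ne _ _ _ (by omega : m + 2 ≠ 0),
        lp.single_apply_ne _ _ _ (by omega : m + 2 ≠ 1), add_zero, inner_zero_right]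
  refine ⟨(A, B), ⟨toeplitz_of_col Y hYS A B hY0, toeplitz_of_col Z hZS _ _ hZ0⟩, ?_⟩
  rintro ⟨A', B'⟩ ⟨h1, h2⟩
  have e1 : ∀ x : E, lp.single 2 0 (A' x) + lp.single 2 1 (B' x)
      = (lp.single 2 0 (A x) + lp.single 2 1 (B x) : L2 E) := by
    intro x
    rw [← hY0 x, h1, ContinuousLinearMap.add_apply, ContinuousLinearMap.comp_apply,
      diag_single, diag_single, shift_single]
  have hA' : ∀ x : E, A' x = A x := by
    intro x
    have := congrArg (fun g : L2 E => (g : ∀ _ : ℕ, E) 0) (e1 x)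
    simpa [lp.coeFn_add, lp.single_apply_self,
      lp.single_apply_ne _ _ _ (by omega : (0 : ℕ) ≠ 1)] using this
  have hB' : ∀ x : E, B' x = B x := by
    intro x
    have := congrArg (fun g : L2 E => (g : ∀ _ : ℕ, E) 1) (e1 x)
    simpa [lp.coeFn_add, lp.single_apply_self,
      lp.single_apply_ne _ _ _ (by omega : (1 : ℕ) ≠ 0)] using this
  exact Prod.ext (ContinuousLinearMap.ext hA') (ContinuousLinearMap.ext hB')
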